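/- For distinct integers n₁ < n₂ with n₁, n₂ ≥ 3, r_μ(C_{n₁}) = r_μ(C_{n₂}) if and only if n₁ = 6 and n₂ = 7. -/

import Mathlib

open SimpleGraph Polynomial

/-- Two vertices `u`, `v` are `X`-visible in `G` if some shortest `u`\u2013`v` path
has no internal vertex in `X`. -/
def SimpleGraph.XVisible {V : Type*} (G : SimpleGraph V) (X : Set V) (u v : V) : Prop :=
  ∃ p : G.Walk u v, p.IsPath ∧ p.length = G.dist u v ∧
    ∀ w ∈ p.support, w ∈ X → w = u ∨ w = v

/-- `X` is a mutual-visibility set of `G`. -/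
def SimpleGraph.IsMutualVisibilitySet {V : Type*} (G : SimpleGraph V) (X : Set V) : Prop :=
  ∀ u ∈ X, ∀ v ∈ X, G.XVisible X u v


namespace RmuAux

open Fin.NatCast Fin.CommRing

variable {n : ℕ}

lemma val_sub (a b : Fin n) :
    (a - b).val = if b.val ≤ a.val then a.val - b.val else a.val + n - b.val := by
  have ha := a.isLt; have hb := b.isLt
  rw [Fin.sub_def]
  split_ifs with h
  · show (n - b.val + a.val) % n = _
    have e : n - b.val + a.val = n + (a.val - b.val) := by omega
    rw [e, Nat.add_mod_left, Nat.mod_eq_of_lt (by omega)]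
  · show (n - b.val + a.val) % n = _
    rw [Nat.mod_eq_of_lt (by omega)]
    omega

lemma val_natCast' [NeZero n] {k : ℕ} (hk : k < n) : ((k : Fin n)).val = k := by
  rw [Fin.val_natCast]; exact Nat.mod_eq_of_lt hk

lemma val_shift [NeZero n] (a : Fin n) {x y : ℕ} (hx : x < n) (hy : y < n) :
    ((a + (x : Fin n)) - (a + (y : Fin n))).val = if y ≤ x then x - y else n + x - y := by
  have h1 : (a + (x : Fin n)) - (a + (y : Fin n)) = (x : Fin n) - (y : Fin n) := by
    ring_nf
  rw [h1, val_sub, val_natCast' hx, val_natCast' hy]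
  split_ifs <;> omega

lemma neg_val [NeZero n] (t : Fin n) : (-t).val = if t.val = 0 then 0 else n - t.val := by
  have : -t = 0 - t := by ring
  rw [this, val_sub]
  have h0 : (0 : Fin n).val = 0 := Fin.val_zero n
  split_ifs <;> omega

lemma val_one' (hn : 3 ≤ n) [NeZero n] : ((1 : Fin n)).val = 1 := by
  rw [← Nat.cast_one, val_natCast' (by omega)]

lemma val_add_one (hn : 3 ≤ n) [NeZero n] (t : Fin n) :
    ((t + 1 : Fin n)).val = if t.val + 1 = n then 0 else t.val + 1 := by
  have h := t.isLt
  have h1 : (t + 1 : Fin n) = t - (0 - 1) := by ring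
  rw [h1, val_sub, val_sub]
  simp only [Fin.val_zero, val_one' hn]
  split_ifs <;> omega


lemma val_sub_add_val_sub (a b : Fin n) : a = b ∨ (a - b).val + (b - a).val = n := by
  rcases eq_or_ne a b with h | h
  · exact Or.inl h
  · right
    have ha := a.isLt; have hb := b.isLt
    have hne : a.val ≠ b.val := fun hc => h (Fin.ext hc)
    rw [val_sub, val_sub]
    split_ifs <;> omega

lemma adj_succ (hn : 3 ≤ n) [NeZero n] (u : Fin n) : (cycleGraph n).Adj u (u + 1) := by
  rw [cycleGraph_adj']
  right
  have : u + 1 - u = 1 := by ring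
  rw [this, val_one' hn]

lemma exists_arc_walk (hn : 3 ≤ n) [NeZero n] (d : ℕ) (hd : d < n) (u : Fin n) :
    ∃ p : (cycleGraph n).Walk u (u + (d : Fin n)), p.length = d ∧
      p.support = List.map (fun i : ℕ => u + (i : Fin n)) (List.range (d+1)) := by
  induction d generalizing u with
  | zero =>
    have h : u = u + ((0:ℕ) : Fin n) := by simp
    refine ⟨Walk.nil.copy rfl h, by simp, ?_⟩
    rw [Walk.support_copy, Walk.support_nil]
    simp [List.range_succ]
  | succ d ih =>
    obtain ⟨q, hq1, hq2⟩ := ih (by omega) (u + 1)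
    have h : (u + 1) + ((d:ℕ) : Fin n) = u + (((d+1 : ℕ)) : Fin n) := by
      push_cast; ring
    refine ⟨(Walk.cons (adj_succ hn u) q).copy rfl h,
      by rw [Walk.length_copy, Walk.length_cons, hq1], ?_⟩
    rw [Walk.support_copy, Walk.support_cons, hq2]
    conv_rhs => rw [List.range_succ_eq_map]
    rw [List.map_cons, List.map_map]
    congr 1
    · rw [Nat.cast_zero, add_zero]
    · simp only [Function.comp_def, Nat.succ_eq_add_one]
      apply List.map_congr_left
      intro i _
      push_cast
      ring

lemma fin_lip (hn : 3 ≤ n) [NeZero n] (t : Fin n) :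
    min ((t+1 : Fin n)).val ((-(t+1) : Fin n)).val ≤ min t.val ((-t : Fin n)).val + 1 := by
  have h := t.isLt
  rw [val_add_one hn, neg_val, neg_val, val_add_one hn]
  split_ifs <;> omega

lemma lip_step (hn : 3 ≤ n) [NeZero n] {a x : Fin n} (h : (cycleGraph n).Adj a x)
    (v : Fin n) : min (v - a).val (a - v).val ≤ min (v - x).val (x - v).val + 1 := by
  rw [cycleGraph_adj'] at h
  rcases h with h | h
  · -- (a - x).val = 1, a = x + 1
    have e : a = 1 + x := sub_eq_iff_eq_add.mp (Fin.ext (by rw [h, val_one' hn]))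
    have e1 : (v - a).val = ((-((-(v-x)) + 1) : Fin n)).val := by rw [e]; ring_nf
    have e2 : (a - v).val = (((-(v-x)) + 1 : Fin n)).val := by rw [e]; ring_nf
    have e3 : (x - v).val = ((-(v - x) : Fin n)).val := by ring_nf
    have e4 : (v - x).val = ((-(-(v - x)) : Fin n)).val := by rw [neg_neg]
    have := fin_lip hn (-(v-x))
    omega
  · -- (x - a).val = 1, x = a + 1
    have e : x = 1 + a := sub_eq_iff_eq_add.mp (Fin.ext (by rw [h, val_one' hn]))
    have e1 : (v - a).val = (((v - x) + 1 : Fin n)).val := by rw [e]; ring_nf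
    have e2 : (a - v).val = ((-((v - x) + 1) : Fin n)).val := by rw [e]; ring_nf
    have e3 : (x - v).val = ((-(v - x) : Fin n)).val := by ring_nf
    have := fin_lip hn (v - x)
    omega

lemma length_lower_bound (hn : 3 ≤ n) [NeZero n] {u v : Fin n}
    (p : (cycleGraph n).Walk u v) : min (v - u).val (u - v).val ≤ p.length := by
  induction p with
  | nil => simp [sub_self]
  | cons h q ih =>
    rw [Walk.length_cons]
    calc _ ≤ _ + 1 := lip_step hn h _
      _ ≤ _ + 1 := by omega

lemma cycle_dist (hn : 3 ≤ n) [NeZero n] (u v : Fin n) :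
    (cycleGraph n).dist u v = min (v - u).val (u - v).val := by
  have hconn : (cycleGraph n).Connected := by
    rcases n with _ | m
    · omega
    · exact cycleGraph_connected
  apply le_antisymm
  · apply le_min
    · obtain ⟨p, hp, -⟩ := exists_arc_walk hn (v - u).val (Fin.isLt _) u
      have := dist_le (p.copy rfl (by rw [Fin.cast_val_eq_self, add_sub_cancel]))
      rwa [Walk.length_copy, hp] at this
    · obtain ⟨p, hp, -⟩ := exists_arc_walk hn (u - v).val (Fin.isLt _) v
      rw [SimpleGraph.dist_comm]
      have := dist_le (p.copy rfl (by rw [Fin.cast_val_eq_self, add_sub_cancel]))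
      rwa [Walk.length_copy, hp] at this
  · obtain ⟨p, hp⟩ := hconn.exists_walk_length_eq_dist u v
    rw [← hp]
    exact length_lower_bound hn p



lemma exists_arc_path (hn : 3 ≤ n) [NeZero n] (d : ℕ) (hd : d < n) (u : Fin n) :
    ∃ p : (cycleGraph n).Walk u (u + (d : Fin n)), p.IsPath ∧ p.length = d ∧
      ∀ x ∈ p.support, ∃ i ≤ d, x = u + (i : Fin n) := by
  obtain ⟨p, hp1, hp2⟩ := exists_arc_walk hn d hd u
  refine ⟨p, ?_, hp1, ?_⟩
  · apply Walk.IsPath.mk'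
    rw [hp2]
    refine List.Nodup.map_on ?_ List.nodup_range
    intro i hi k hk he
    rw [List.mem_range] at hi hk
    have : ((i : Fin n)) = (k : Fin n) := by
      have := add_left_cancel he
      exact this
    have hv := congrArg Fin.val this
    rw [val_natCast' (by omega), val_natCast' (by omega)] at hv
    exact hv
  · intro x hx
    rw [hp2, List.mem_map] at hx
    obtain ⟨i, hi, rfl⟩ := hx
    rw [List.mem_range] at hi
    exact ⟨i, by omega, rfl⟩

lemma arc_mem_support (hn : 3 ≤ n) [NeZero n] {u v : Fin n}
    (p : (cycleGraph n).Walk u v) (hlen : 2 * p.length < n)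
    (hd : p.length = (v - u).val) :
    ∀ i ≤ p.length, u + (i : Fin n) ∈ p.support := by
  induction p with
  | nil =>
    intro i hi
    simp only [Walk.length_nil, Nat.le_zero] at hi
    subst hi
    simp
  | @cons a x w h q ih =>
    rw [Walk.length_cons] at hlen hd ⊢
    have hd1 : 1 ≤ (w - a).val := by omega
    have hdlt := (w - a).isLt
    rw [cycleGraph_adj'] at h
    rcases h with h1 | h1
    · -- (a - x).val = 1, a = x + 1 : wrong direction, contradiction
      exfalso
      have e : a = 1 + x := sub_eq_iff_eq_add.mp (Fin.ext (by rw [h1, val_one' hn]))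
      have e1 : (w - x).val = (w - a).val + 1 := by
        have e' : w - x = (w - a) + 1 := by rw [e]; ring
        rw [e', val_add_one hn]
        split_ifs <;> omega
      have e2 : (x - w).val + (w - x).val = n := by
        rcases val_sub_add_val_sub x w with h' | h'
        · exfalso; rw [h', sub_self] at e1; simp at e1
        · omega
      have := length_lower_bound hn q
      omega
    · -- (x - a).val = 1, x = a + 1
      have e : x = 1 + a := sub_eq_iff_eq_add.mp (Fin.ext (by rw [h1, val_one' hn]))
      have e1 : (w - x).val = (w - a).val - 1 := by
        have : w - x = (w - a) - 1 := by rw [e]; ring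
        rw [this, val_sub, val_one' hn]
        split_ifs <;> omega
      intro i hi
      rcases Nat.eq_zero_or_pos i with rfl | hpos
      · simp
      · obtain ⟨i', rfl⟩ : ∃ i', i = i' + 1 := ⟨i - 1, by omega⟩
        have hmem := ih (by omega) (by omega) i' (by omega)
        rw [Walk.support_cons, List.mem_cons]
        right
        have : x + (i' : Fin n) = a + ((i' + 1 : ℕ) : Fin n) := by
          rw [e]; push_cast; ring
        rwa [this] at hmem

lemma xvisible_refl (G : SimpleGraph (Fin n)) (X : Set (Fin n)) (u : Fin n) :
    G.XVisible X u u := by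
  refine ⟨Walk.nil, Walk.IsPath.nil, by simp [SimpleGraph.dist_self], ?_⟩
  intro w hw _
  simp only [Walk.support_nil, List.mem_singleton] at hw
  exact Or.inl hw

lemma xvisible_symm {G : SimpleGraph (Fin n)} {X : Set (Fin n)} {u v : Fin n}
    (h : G.XVisible X u v) : G.XVisible X v u := by
  obtain ⟨p, hp, hlen, hsupp⟩ := h
  refine ⟨p.reverse, hp.reverse, ?_, ?_⟩
  · rw [Walk.length_reverse, hlen, SimpleGraph.dist_comm]
  · intro w hw hwX
    rw [Walk.support_reverse, List.mem_reverse] at hw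
    exact (hsupp w hw hwX).symm

lemma vis_of_arc_free (hn : 3 ≤ n) [NeZero n] (X : Set (Fin n)) (u v : Fin n)
    (hd : 2 * (v - u).val ≤ n)
    (h : ∀ x ∈ X, x ≠ u → x ≠ v → ¬ ((x - u).val < (v - u).val)) :
    (cycleGraph n).XVisible X u v := by
  set d := (v - u).val with hdd
  obtain ⟨p, hp, hlen, hsupp⟩ := exists_arc_path hn d (Fin.isLt _) u
  have hvu : u + ((d : ℕ) : Fin n) = v := by
    rw [hdd, Fin.cast_val_eq_self, add_sub_cancel]
  refine ⟨p.copy rfl hvu, (Walk.isPath_copy _ _ _).mpr hp, ?_, ?_⟩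
  · rw [Walk.length_copy, hlen, cycle_dist hn]
    have : (u - v).val = if d = 0 then 0 else n - d := by
      have : u - v = -(v - u) := by ring
      rw [this, neg_val]
    rcases Nat.eq_zero_or_pos d with h0 | h0
    · simp_all
    · rw [this]; split_ifs <;> omega
  · intro w hw hwX
    rw [Walk.support_copy] at hw
    obtain ⟨i, hi, rfl⟩ := hsupp w hw
    by_contra hcon
    push_neg at hcon
    obtain ⟨hne1, hne2⟩ := hcon
    have := h _ hwX hne1 hne2
    have hval : ((u + (i : Fin n)) - u).val = i := by
      have : (u + (i : Fin n)) - u = (i : Fin n) := by ring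
      rw [this, val_natCast' (by omega)]
    rw [hval] at this
    have : i = d := by omega
    subst this
    exact hne2 hvu

lemma not_vis_of_blocked (hn : 3 ≤ n) [NeZero n] (X : Set (Fin n)) (u v w : Fin n)
    (hw : w ∈ X) (h2 : 2 * (v - u).val < n) (h0 : (w - u).val ≠ 0)
    (hlt : (w - u).val < (v - u).val) :
    ¬ (cycleGraph n).XVisible X u v := by
  rintro ⟨p, hp, hlen, hsupp⟩
  have hdist : (cycleGraph n).dist u v = (v - u).val := by
    rw [cycle_dist hn]
    have : (u - v).val = if (v-u).val = 0 then 0 else n - (v-u).val := by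
      have e : u - v = -(v - u) := by ring
      rw [e, neg_val]
    rw [this]
    split_ifs <;> omega
  rw [hdist] at hlen
  have hmem := arc_mem_support hn p (by omega) hlen ((w - u).val) (by omega)
  have hwv : u + (((w - u).val : ℕ) : Fin n) = w := by
    rw [Fin.cast_val_eq_self, add_sub_cancel]
  rw [hwv] at hmem
  rcases hsupp w hmem hw with rfl | rfl
  · simp at h0
  · omega

lemma rep [NeZero n] (a p : Fin n) : a + ((p - a).val : Fin n) = p := by
  rw [Fin.cast_val_eq_self]; ring

def Cond (n : ℕ) (X : Finset (Fin n)) : Prop :=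
  ∀ u ∈ X, ∀ v ∈ X, ∀ w ∈ X,
    (w - u).val ≠ 0 → (w - u).val < (v - u).val → n ≤ 2 * (v - u).val

lemma mv_iff_cond (hn : 3 ≤ n) [NeZero n] (X : Finset (Fin n)) (hX : X.card = 3) :
    (cycleGraph n).IsMutualVisibilitySet ↑X ↔ Cond n X := by
  constructor
  · intro hmv u hu v hv w hw h0 hlt
    by_contra hcon
    push_neg at hcon
    exact not_vis_of_blocked hn (↑X) u v w (Finset.mem_coe.mpr hw) (by omega) h0 hlt
      (hmv u (Finset.mem_coe.mpr hu) v (Finset.mem_coe.mpr hv))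
  · intro hc u hu v hv
    rw [Finset.mem_coe] at hu hv
    rcases eq_or_ne u v with rfl | huv
    · exact xvisible_refl _ _ u
    · -- find the third vertex
      have hss : ¬ X ⊆ {u, v} := by
        intro hsub
        have := Finset.card_le_card hsub
        have : ({u, v} : Finset (Fin n)).card ≤ 2 := Finset.card_insert_le _ _ |>.trans (by simp)
        omega
      obtain ⟨w, hw, hwuv⟩ := Finset.not_subset.mp hss
      simp only [Finset.mem_insert, Finset.mem_singleton, not_or] at hwuv
      obtain ⟨hwu, hwv⟩ := hwuv
      have hXeq : ({u, v, w} : Finset (Fin n)) = X := by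
        apply Finset.eq_of_subset_of_card_le
        · intro x hx
          simp only [Finset.mem_insert, Finset.mem_singleton] at hx
          rcases hx with rfl | rfl | rfl <;> assumption
        · rw [hX]
          rw [Finset.card_eq_three.mpr ⟨u, v, w, huv, fun h => hwu h.symm,
            fun h => hwv h.symm, rfl⟩]
      set t := (w - u).val with htdef
      set d := (v - u).val with hddef
      have htn := (w - u).isLt
      have hdn := (v - u).isLt
      have ht0 : t ≠ 0 := by
        intro h0
        apply hwu
        have h1 : w = u + ((t : ℕ) : Fin n) := (rep u w).symm
        rw [h0] at h1
        simpa using h1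
      have hd0 : d ≠ 0 := by
        intro h0
        apply huv
        have h1 : v = u + ((d : ℕ) : Fin n) := (rep u v).symm
        rw [h0] at h1
        simp at h1
        exact h1.symm
      have htd : t ≠ d := by
        intro h0
        apply hwv
        have h1 : w = u + ((t : ℕ) : Fin n) := (rep u w).symm
        have h2 : v = u + ((d : ℕ) : Fin n) := (rep u v).symm
        rw [h1, h2, h0]
      -- (w - v).val in terms of t, d
      have ewv : (w - v).val = if d ≤ t then t - d else n + t - d := by
        have h1 := val_shift u (x := t) (y := d) htn hdn
        rw [rep u w, rep u v] at h1
        exact h1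
      have euv : (u - v).val = n - d := by
        rcases val_sub_add_val_sub u v with h' | h'
        · exact absurd h' huv
        · omega
      rcases lt_or_gt_of_ne htd with hlt | hgt
      · -- w in forward arc: n ≤ 2d, go backward (symm)
        have hnd : n ≤ 2 * d := hc u hu v hv w hw ht0 hlt
        apply xvisible_symm
        apply vis_of_arc_free hn (↑X) v u (by omega)
        intro x hx hxv hxu
        rw [Finset.mem_coe, ← hXeq] at hx
        simp only [Finset.mem_insert, Finset.mem_singleton] at hx
        rcases hx with rfl | rfl | rfl
        · exact absurd rfl hxu
        · exact absurd rfl hxv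
        · rw [ewv, euv]
          split_ifs <;> omega
      · -- w in backward arc: Cond at (v, u, w) gives 2d ≤ n, go forward
        have h0' : (w - v).val ≠ 0 := by rw [ewv]; split_ifs <;> omega
        have hlt' : (w - v).val < (u - v).val := by rw [ewv, euv]; split_ifs <;> omega
        have hnd : n ≤ 2 * (u - v).val := hc v hv u hu w hw h0' hlt'
        rw [euv] at hnd
        apply vis_of_arc_free hn (↑X) u v (by omega)
        intro x hx hxu hxv
        rw [Finset.mem_coe, ← hXeq] at hx
        simp only [Finset.mem_insert, Finset.mem_singleton] at hx
        rcases hx with rfl | rfl | rfl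
        · exact absurd rfl hxu
        · exact absurd rfl hxv
        · omega


def gapSet (n : ℕ) : Finset (ℕ × ℕ) :=
  (Finset.range n ×ˢ Finset.range n).filter fun ij =>
    0 < ij.1 ∧ ij.1 < ij.2 ∧ 2 * ij.1 ≤ n ∧ 2 * (ij.2 - ij.1) ≤ n ∧ n ≤ 2 * ij.2

lemma sum_Icc_id (m : ℕ) : 2 * (∑ i ∈ Finset.Icc 1 m, i) = m * (m + 1) := by
  have h1 : Finset.range (m + 1) = insert 0 (Finset.Icc 1 m) := by
    ext x; simp; omega
  have h2 := Finset.sum_range_id_mul_two (m + 1)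
  rw [h1, Finset.sum_insert (by simp)] at h2
  simp at h2
  have : (m+1) * m = m * (m+1) := Nat.mul_comm _ _
  omega

lemma gapSet_eq (n : ℕ) (hn : 3 ≤ n) :
    gapSet n = (Finset.Icc 1 (n/2)).biUnion
      (fun i => {i} ×ˢ Finset.Icc (max (i+1) (n - n/2)) (min (n-1) (i + n/2))) := by
  ext ⟨i, j⟩
  simp only [gapSet, Finset.mem_filter, Finset.mem_product, Finset.mem_range,
    Finset.mem_biUnion, Finset.mem_Icc, Finset.mem_singleton]
  constructor
  · rintro ⟨⟨h1, h2⟩, h3, h4, h5, h6, h7⟩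
    exact ⟨i, by omega, rfl, by omega, by omega⟩
  · rintro ⟨a, ha, rfl, hj⟩
    omega

lemma gapSet_card_sum (n : ℕ) (hn : 3 ≤ n) :
    (gapSet n).card =
      ∑ i ∈ Finset.Icc 1 (n/2), (min (n-1) (i + n/2) + 1 - max (i+1) (n - n/2)) := by
  rw [gapSet_eq n hn, Finset.card_biUnion]
  · apply Finset.sum_congr rfl
    intro i _
    rw [Finset.singleton_product, Finset.card_map, Nat.card_Icc]
  · intro x hx y hy hxy
    simp only [Finset.disjoint_left]
    rintro ⟨p, q⟩ hp hq
    simp only [Finset.singleton_product, Finset.mem_map, Function.Embedding.coeFn_mk] at hp hq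
    obtain ⟨b, _, hb⟩ := hp
    obtain ⟨c, _, hc⟩ := hq
    apply hxy
    rw [← show (x, b).1 = x from rfl, hb, ← show (y, c).1 = y from rfl, hc]

lemma gap_card (n : ℕ) (hn : 3 ≤ n) :
    8 * (gapSet n).card = if n % 2 = 1 then (n-1)*(n+1) else (n-2)*(n+8) := by
  rw [gapSet_card_sum n hn]
  rcases Nat.even_or_odd n with he | ho
  · -- even, n = 2m = 2(x+2)
    obtain ⟨m, rfl⟩ := he
    obtain ⟨x, rfl⟩ : ∃ x, m = x + 2 := ⟨m - 2, by omega⟩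
    have hdiv : (x+2 + (x+2)) / 2 = x + 2 := by omega
    rw [if_neg (by omega), hdiv]
    have hsplit : Finset.Icc 1 (x+2) = insert (x+2) (Finset.Icc 1 (x+1)) := by
      ext y; simp; omega
    rw [hsplit, Finset.sum_insert (by simp)]
    have hcongr : ∀ i ∈ Finset.Icc 1 (x+1),
        (min (x+2+(x+2)-1) (i + (x+2)) + 1 - max (i+1) (x+2+(x+2) - (x+2))) = i + 1 := by
      intro i hi
      simp only [Finset.mem_Icc] at hi
      omega
    rw [Finset.sum_congr rfl hcongr, Finset.sum_add_distrib, Finset.sum_const, Nat.card_Icc,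
      smul_eq_mul]
    have hg := sum_Icc_id (x+1)
    have hrhs : (x+2+(x+2)-2)*((x+2)+(x+2)+8) = 4*((x+1)*(x+1+1)) + 16*(x+1) := by
      have e : x+2+(x+2)-2 = 2*x+2 := by omega
      rw [e]
      ring
    rw [hrhs]
    omega
  · -- odd, n = 2m+1
    obtain ⟨m, rfl⟩ := ho
    have hdiv : (2*m + 1) / 2 = m := by omega
    rw [if_pos (by omega), hdiv]
    have hcongr : ∀ i ∈ Finset.Icc 1 m,
        (min (2*m+1-1) (i + m) + 1 - max (i+1) (2*m+1 - m)) = i := by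
      intro i hi
      simp only [Finset.mem_Icc] at hi
      omega
    rw [Finset.sum_congr rfl hcongr]
    have hg := sum_Icc_id m
    have hrhs : (2*m+1-1)*(2*m+1+1) = 4*(m*(m+1)) := by
      have e : 2*m+1-1 = 2*m := by omega
      rw [e]
      ring
    rw [hrhs]
    omega


lemma cond_gaps (hn : 3 ≤ n) [NeZero n] (a : Fin n) {i j : ℕ}
    (h0 : 0 < i) (hij : i < j) (hjn : j < n) :
    Cond n {a, a + (i : Fin n), a + (j : Fin n)} ↔
      (2*i ≤ n ∧ 2*(j-i) ≤ n ∧ n ≤ 2*j) := by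
  have key : ∀ x y : ℕ, x < n → y < n →
      ((a + (x : Fin n)) - (a + (y : Fin n))).val = if y ≤ x then x - y else n + x - y :=
    fun x y hx hy => val_shift a hx hy
  have key0 : ∀ x : ℕ, x < n → ((a + (x : Fin n)) - a).val = x := by
    intro x hx
    have h := key x 0 hx (by omega)
    rw [Nat.cast_zero, add_zero] at h
    rw [h, if_pos (by omega)]
    omega
  have key0' : ∀ x : ℕ, x < n → (a - (a + (x : Fin n))).val
      = if x = 0 then 0 else n - x := by
    intro x hx
    have h := key 0 x (by omega) hx
    rw [Nat.cast_zero, add_zero] at h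
    rw [h]
    split_ifs <;> omega
  have m1 : a ∈ ({a, a + (i : Fin n), a + (j : Fin n)} : Finset (Fin n)) := by simp
  have m2 : a + (i : Fin n) ∈ ({a, a + (i : Fin n), a + (j : Fin n)} : Finset (Fin n)) := by
    simp
  have m3 : a + (j : Fin n) ∈ ({a, a + (i : Fin n), a + (j : Fin n)} : Finset (Fin n)) := by
    simp
  constructor
  · intro hc
    have c1 := hc _ m1 _ m3 _ m2
    rw [key0 i (by omega), key0 j (by omega)] at c1
    have c1' := c1 (by omega) (by omega)
    have c2 := hc _ m2 _ m1 _ m3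
    rw [key j i (by omega) (by omega), key0' i (by omega)] at c2
    rw [if_pos (by omega), if_neg (by omega)] at c2
    have c2' := c2 (by omega) (by omega)
    have c3 := hc _ m3 _ m2 _ m1
    rw [key0' j (by omega), key i j (by omega) (by omega)] at c3
    rw [if_neg (by omega), if_neg (by omega)] at c3
    have c3' := c3 (by omega) (by omega)
    refine ⟨by omega, by omega, by omega⟩
  · rintro ⟨h1, h2, h3⟩ u hu v hv w hw
    have mem_iff : ∀ p : Fin n, p ∈ ({a, a + (i : Fin n), a + (j : Fin n)} : Finset (Fin n)) →
        ∃ x : ℕ, (x = 0 ∨ x = i ∨ x = j) ∧ x < n ∧ p = a + (x : Fin n) := by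
      intro p hp
      simp only [Finset.mem_insert, Finset.mem_singleton] at hp
      rcases hp with rfl | rfl | rfl
      · exact ⟨0, Or.inl rfl, by omega, by simp⟩
      · exact ⟨i, Or.inr (Or.inl rfl), by omega, rfl⟩
      · exact ⟨j, Or.inr (Or.inr rfl), by omega, rfl⟩
    obtain ⟨xu, hxu, hxun, rfl⟩ := mem_iff u hu
    obtain ⟨xv, hxv, hxvn, rfl⟩ := mem_iff v hv
    obtain ⟨xw, hxw, hxwn, rfl⟩ := mem_iff w hw
    rw [key xw xu hxwn hxun, key xv xu hxvn hxun]
    split_ifs <;> omega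

lemma mem_gapSet {n k l : ℕ} : (k, l) ∈ gapSet n ↔
    k < n ∧ l < n ∧ 0 < k ∧ k < l ∧ 2*k ≤ n ∧ 2*(l-k) ≤ n ∧ n ≤ 2*l := by
  simp only [gapSet, Finset.mem_filter, Finset.mem_product, Finset.mem_range]
  tauto

lemma val_add_sub [NeZero n] (b : Fin n) {k : ℕ} (hk : k < n) :
    ((b + (k : Fin n)) - b).val = k := by
  have h := val_shift b (x := k) (y := 0) hk (Nat.pos_of_ne_zero (NeZero.ne n))
  rw [Nat.cast_zero, add_zero] at h
  rw [h, if_pos (by omega)]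
  omega

lemma anchor_ne [NeZero n] (a : Fin n) {x : ℕ} (hx0 : x ≠ 0) (hxn : x < n) :
    a ≠ a + (x : Fin n) := by
  intro h
  have h' : a + (0 : Fin n) = a + (x : Fin n) := by rw [add_zero]; exact h
  have hc := add_left_cancel h'
  have := congrArg Fin.val hc
  rw [val_natCast' hxn] at this
  simp at this
  exact hx0 this.symm

lemma anchor_ne' [NeZero n] (a : Fin n) {x y : ℕ} (hxy : x ≠ y) (hxn : x < n) (hyn : y < n) :
    a + (x : Fin n) ≠ a + (y : Fin n) := by
  intro h
  have hc := add_left_cancel h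
  have := congrArg Fin.val hc
  rw [val_natCast' hxn, val_natCast' hyn] at this
  exact hxy this

lemma mem_triple [NeZero n] {a p : Fin n} {i j : ℕ}
    (hi : i < n) (hj : j < n)
    (hp : p ∈ ({a, a + (i : Fin n), a + (j : Fin n)} : Finset (Fin n))) :
    ∃ x : ℕ, (x = 0 ∨ x = i ∨ x = j) ∧ x < n ∧ p = a + (x : Fin n) := by
  simp only [Finset.mem_insert, Finset.mem_singleton] at hp
  rcases hp with rfl | rfl | rfl
  · exact ⟨0, Or.inl rfl, by omega, by simp⟩
  · exact ⟨i, Or.inr (Or.inl rfl), hi, rfl⟩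
  · exact ⟨j, Or.inr (Or.inr rfl), hj, rfl⟩

noncomputable def anchorMap (n : ℕ) [NeZero n] : Fin n × ℕ × ℕ → Finset (Fin n) :=
  fun t => {t.1, t.1 + (t.2.1 : Fin n), t.1 + (t.2.2 : Fin n)}

set_option maxHeartbeats 1000000 in
lemma fiber_card (hn : 3 ≤ n) [NeZero n] (a : Fin n) {i j : ℕ}
    (h0 : 0 < i) (hij : i < j) (hjn : j < n)
    (hg : 2*i ≤ n ∧ 2*(j-i) ≤ n ∧ n ≤ 2*j) :
    ((Finset.univ ×ˢ gapSet n).filter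
      (fun t => anchorMap n t = anchorMap n (a, i, j))).card = 3 := by
  have hkey : ((Finset.univ ×ˢ gapSet n).filter
      (fun t => anchorMap n t = anchorMap n (a, i, j))) =
      ({(a, (i, j)), (a + (i : Fin n), (j - i, n - i)),
        (a + (j : Fin n), (n - j, n + i - j))} : Finset (Fin n × ℕ × ℕ)) := by
    ext ⟨b, k, l⟩
    simp only [Finset.mem_filter, Finset.mem_product, Finset.mem_univ, true_and,
      Finset.mem_insert, Finset.mem_singleton, Prod.mk.injEq]
    constructor
    · rintro ⟨hmem, hfe⟩
      rw [mem_gapSet] at hmem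
      obtain ⟨hkn, hln, hk0, hkl, hk2, hlk2, hl2⟩ := hmem
      simp only [anchorMap] at hfe
      have hb : b ∈ ({a, a + (i : Fin n), a + (j : Fin n)} : Finset (Fin n)) := by
        rw [← hfe]; exact Finset.mem_insert_self _ _
      have hbk : b + (k : Fin n) ∈ ({a, a + (i : Fin n), a + (j : Fin n)} : Finset (Fin n)) := by
        rw [← hfe]; simp
      have hbl : b + (l : Fin n) ∈ ({a, a + (i : Fin n), a + (j : Fin n)} : Finset (Fin n)) := by
        rw [← hfe]; simp
      obtain ⟨x, hx, hxn, rfl⟩ := mem_triple (by omega) hjn hb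
      obtain ⟨y, hy, hyn, hky⟩ := mem_triple (by omega) hjn hbk
      obtain ⟨z, hz, hzn, hlz⟩ := mem_triple (by omega) hjn hbl
      have ek : k = if x ≤ y then y - x else n + y - x := by
        have h1 := val_shift a (x := y) (y := x) hyn hxn
        have h2 : ((a + (y : Fin n)) - (a + (x : Fin n))).val = k := by
          rw [← hky]
          exact val_add_sub _ hkn
        omega
      have el : l = if x ≤ z then z - x else n + z - x := by
        have h1 := val_shift a (x := z) (y := x) hzn hxn
        have h2 : ((a + (z : Fin n)) - (a + (x : Fin n))).val = l := by
          rw [← hlz]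
          exact val_add_sub _ hln
        omega
      have ek' : (x ≤ y ∧ k = y - x) ∨ (y < x ∧ k = n + y - x) := by
        split_ifs at ek with h
        · exact Or.inl ⟨h, ek⟩
        · exact Or.inr ⟨by omega, ek⟩
      have el' : (x ≤ z ∧ l = z - x) ∨ (z < x ∧ l = n + z - x) := by
        split_ifs at el with h
        · exact Or.inl ⟨h, el⟩
        · exact Or.inr ⟨by omega, el⟩
      have hdet : (x = 0 ∧ k = i ∧ l = j) ∨ (x = i ∧ k = j - i ∧ l = n - i) ∨
          (x = j ∧ k = n - j ∧ l = n + i - j) := by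
        obtain ⟨hg1, hg2, hg3⟩ := hg
        rcases hx with h | h | h
        · left
          have hk : k = i ∨ k = j := by omega
          have hl : l = i ∨ l = j := by omega
          exact ⟨h, by omega, by omega⟩
        · right; left
          have hk : k = j - i ∨ k = n - i := by omega
          have hl : l = j - i ∨ l = n - i := by omega
          exact ⟨h, by omega, by omega⟩
        · right; right
          have hk : k = n - j ∨ k = n + i - j := by omega
          have hl : l = n - j ∨ l = n + i - j := by omega
          exact ⟨h, by omega, by omega⟩
      rcases hdet with ⟨h1, h2, h3⟩ | ⟨h1, h2, h3⟩ | ⟨h1, h2, h3⟩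
      · left
        subst h1
        refine ⟨by simp, h2, h3⟩
      · right; left
        subst h1
        exact ⟨rfl, h2, h3⟩
      · right; right
        subst h1
        exact ⟨rfl, h2, h3⟩
    · have hcast1 : a + (i : Fin n) + ((j - i : ℕ) : Fin n) = a + (j : Fin n) := by
        rw [add_assoc, ← Nat.cast_add, show i + (j - i) = j by omega]
      have hcast2 : a + (i : Fin n) + ((n - i : ℕ) : Fin n) = a := by
        rw [add_assoc, ← Nat.cast_add, show i + (n - i) = n by omega, Fin.natCast_self,
          add_zero]
      have hcast3 : a + (j : Fin n) + ((n - j : ℕ) : Fin n) = a := by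
        rw [add_assoc, ← Nat.cast_add, show j + (n - j) = n by omega, Fin.natCast_self,
          add_zero]
      have hcast4 : a + (j : Fin n) + ((n + i - j : ℕ) : Fin n) = a + (i : Fin n) := by
        rw [add_assoc, ← Nat.cast_add, show j + (n + i - j) = n + i by omega, Nat.cast_add,
          Fin.natCast_self, zero_add]
      rintro (⟨rfl, rfl, rfl⟩ | ⟨rfl, rfl, rfl⟩ | ⟨rfl, rfl, rfl⟩)
      · exact ⟨by rw [mem_gapSet]; omega, rfl⟩
      · refine ⟨by rw [mem_gapSet]; omega, ?_⟩
        simp only [anchorMap]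
        rw [hcast1, hcast2]
        ext p
        simp only [Finset.mem_insert, Finset.mem_singleton]
        tauto
      · refine ⟨by rw [mem_gapSet]; omega, ?_⟩
        simp only [anchorMap]
        rw [hcast3, hcast4]
        ext p
        simp only [Finset.mem_insert, Finset.mem_singleton]
        tauto
  rw [hkey]
  rw [Finset.card_eq_three]
  refine ⟨_, _, _, ?_, ?_, ?_, rfl⟩
  · intro h
    have := congrArg Prod.fst h
    simp only at this
    exact anchor_ne a (by omega) (by omega) this
  · intro h
    have := congrArg Prod.fst h
    simp only at this
    exact anchor_ne a (by omega) hjn this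
  · intro h
    have := congrArg Prod.fst h
    simp only at this
    exact anchor_ne' a (show i ≠ j by omega) (by omega) hjn this

open scoped Classical in
lemma card_cond_eq (hn : 3 ≤ n) [NeZero n] :
    3 * ((Finset.univ : Finset (Finset (Fin n))).filter
        (fun X => X.card = 3 ∧ Cond n X)).card = n * (gapSet n).card := by
  classical
  have hmap : ∀ t ∈ Finset.univ ×ˢ gapSet n, anchorMap n t ∈
      (Finset.univ : Finset (Finset (Fin n))).filter (fun X => X.card = 3 ∧ Cond n X) := by
    rintro ⟨b, k, l⟩ ht
    rw [Finset.mem_product] at ht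
    have hm := mem_gapSet.mp ht.2
    rw [Finset.mem_filter]
    refine ⟨Finset.mem_univ _, ?_, ?_⟩
    · simp only [anchorMap]
      exact Finset.card_eq_three.mpr ⟨b, b + (k : Fin n), b + (l : Fin n),
        anchor_ne b (by omega) (by omega), anchor_ne b (by omega) (by omega),
        anchor_ne' b (by omega) (by omega) (by omega), rfl⟩
    · simp only [anchorMap]
      exact (cond_gaps hn b (by omega) (by omega) (by omega)).mpr
        ⟨by omega, by omega, by omega⟩
  have hsum := Finset.card_eq_sum_card_fiberwise hmap
  rw [Finset.card_product, Finset.card_univ, Fintype.card_fin] at hsum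
  have hfib : ∀ X ∈ (Finset.univ : Finset (Finset (Fin n))).filter
      (fun X => X.card = 3 ∧ Cond n X),
      (((Finset.univ : Finset (Fin n)) ×ˢ gapSet n).filter
        (fun t => anchorMap n t = X)).card = 3 := by
    intro X hX
    rw [Finset.mem_filter] at hX
    obtain ⟨-, h3, hcond⟩ := hX
    obtain ⟨u, v, w, huv, huw, hvw, rfl⟩ := Finset.card_eq_three.mp h3
    have hv : u + (((v - u).val : ℕ) : Fin n) = v := rep u v
    have hw : u + (((w - u).val : ℕ) : Fin n) = w := rep u w
    have h1 : (v - u).val ≠ 0 := by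
      intro h; apply huv; rw [← hv, h]; simp
    have h2 : (w - u).val ≠ 0 := by
      intro h; apply huw; rw [← hw, h]; simp
    have h12 : (v - u).val ≠ (w - u).val := by
      intro h; apply hvw; rw [← hv, ← hw, h]
    rcases Nat.lt_or_ge (v - u).val (w - u).val with hlt | hge
    · have heq : anchorMap n (u, (v - u).val, (w - u).val) = {u, v, w} := by
        simp only [anchorMap]
        rw [hv, hw]
      have hcond' : Cond n {u, u + (((v - u).val : ℕ) : Fin n),
          u + (((w - u).val : ℕ) : Fin n)} := by
        rw [hv, hw]; exact hcond
      have hg := (cond_gaps hn u (by omega) hlt ((w - u).isLt)).mp hcond'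
      have hfc := fiber_card hn u (by omega) hlt ((w - u).isLt) hg
      simp only [← heq]
      exact hfc
    · have hgt : (w - u).val < (v - u).val := by omega
      have hperm : ({u, w, v} : Finset (Fin n)) = {u, v, w} := by
        ext p
        simp only [Finset.mem_insert, Finset.mem_singleton]
        tauto
      have heq : anchorMap n (u, (w - u).val, (v - u).val) = {u, v, w} := by
        simp only [anchorMap]
        rw [hw, hv, hperm]
      have hcond' : Cond n {u, u + (((w - u).val : ℕ) : Fin n),
          u + (((v - u).val : ℕ) : Fin n)} := by
        rw [hw, hv, hperm]; exact hcond
      have hg := (cond_gaps hn u (by omega) hgt ((v - u).isLt)).mp hcond'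
      have hfc := fiber_card hn u (by omega) hgt ((v - u).isLt) hg
      simp only [← heq]
      exact hfc
  rw [Finset.sum_congr rfl hfib, Finset.sum_const, smul_eq_mul] at hsum
  omega

end RmuAux

open scoped Classical in
/-- The number of mutual-visibility sets of cardinality 3 (the maximum) in the cycle `C_n`. -/
noncomputable def rmuC (n : ℕ) : ℕ :=
  (Finset.univ.filter (fun X : Finset (Fin n) =>
    X.card = 3 ∧ (cycleGraph n).IsMutualVisibilitySet ↑X)).card

namespace RmuAux

open scoped Classical in
lemma rmu_eq_card_cond (hn : 3 ≤ n) [NeZero n] :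
    rmuC n = ((Finset.univ : Finset (Finset (Fin n))).filter
      (fun X => X.card = 3 ∧ Cond n X)).card := by
  classical
  unfold rmuC
  congr 1
  apply Finset.filter_congr
  intro X _
  exact and_congr_right fun h3 => mv_iff_cond hn X h3

lemma rmu_formula {n : ℕ} (hn : 3 ≤ n) :
    24 * rmuC n = n * (if n % 2 = 1 then (n-1)*(n+1) else (n-2)*(n+8)) := by
  haveI : NeZero n := ⟨by omega⟩
  have h3 : 3 * rmuC n = n * (gapSet n).card := by
    rw [rmu_eq_card_cond hn]
    exact card_cond_eq hn
  have h8 := gap_card n hn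
  calc 24 * rmuC n = 8 * (3 * rmuC n) := by ring
    _ = 8 * (n * (gapSet n).card) := by rw [h3]
    _ = n * (8 * (gapSet n).card) := by ring
    _ = _ := by rw [h8]

end RmuAux


theorem rmu_eq_iff_six_seven (n₁ n₂ : ℕ) (h₁ : 3 ≤ n₁) (h₁₂ : n₁ < n₂) :
    rmuC n₁ = rmuC n₂ ↔ n₁ = 6 ∧ n₂ = 7 := by
  have f1 := RmuAux.rmu_formula h₁
  have f2 := RmuAux.rmu_formula (show 3 ≤ n₂ by omega)
  constructor
  · intro h
    rw [h] at f1
    have key := f1.symm.trans f2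
    have hA : (3:ℤ) ≤ (n₁:ℤ) := by exact_mod_cast h₁
    have hB : (n₁:ℤ) < (n₂:ℤ) := by exact_mod_cast h₁₂
    rcases Nat.even_or_odd n₁ with he1 | ho1 <;> rcases Nat.even_or_odd n₂ with he2 | ho2
    · -- even, even : contradiction
      exfalso
      have hp1 := Nat.even_iff.mp he1
      have hp2 := Nat.even_iff.mp he2
      rw [if_neg (by omega), if_neg (by omega)] at key
      zify [show 2 ≤ n₁ by omega, show 2 ≤ n₂ by omega] at key
      have h4 : (4:ℤ) ≤ (n₁:ℤ) := by
        have : 4 ≤ n₁ := by omega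
        exact_mod_cast this
      nlinarith [sq_nonneg ((n₁:ℤ)+(n₂:ℤ)), sq_nonneg ((n₁:ℤ)-(n₂:ℤ)), sq_nonneg (n₁:ℤ),
        sq_nonneg (n₂:ℤ)]
    · -- even, odd
      have hp1 := Nat.even_iff.mp he1
      have hp2 := Nat.odd_iff.mp ho2
      rw [if_neg (by omega), if_pos (by omega)] at key
      rcases (show n₂ = n₁ + 1 ∨ n₁ + 3 ≤ n₂ by omega) with hcase | hcase
    -- n₂ = n₁ + 1 : forces n₁ = 6
      · subst hcase
        zify [show 2 ≤ n₁ by omega, show 1 ≤ n₁ + 1 by omega] at key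
        have h4 : (4:ℤ) ≤ (n₁:ℤ) := by
          have : 4 ≤ n₁ := by omega
          exact_mod_cast this
        have h6 : (n₁:ℤ) = 6 := by
          have hz : (n₁:ℤ) * (3*(n₁:ℤ) - 18) = 0 := by ring_nf; ring_nf at key; linarith
          rcases mul_eq_zero.mp hz with h' | h'
          · exfalso; omega
          · linarith
        have : n₁ = 6 := by exact_mod_cast h6
        exact ⟨this, by omega⟩
      · exfalso
        zify [show 2 ≤ n₁ by omega, show 1 ≤ n₂ by omega] at key
        have h4 : (4:ℤ) ≤ (n₁:ℤ) := by
          have : 4 ≤ n₁ := by omega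
          exact_mod_cast this
        have hB3 : (n₁:ℤ) + 3 ≤ (n₂:ℤ) := by exact_mod_cast hcase
        nlinarith [sq_nonneg ((n₁:ℤ)+(n₂:ℤ)), sq_nonneg ((n₁:ℤ)-(n₂:ℤ)), sq_nonneg (n₁:ℤ),
          sq_nonneg (n₂:ℤ),
          mul_pos (show (0:ℤ) < (n₂:ℤ) - (n₁:ℤ) - 2 by omega) (show (0:ℤ) < (n₂:ℤ) by omega),
          mul_pos (show (0:ℤ) < (n₂:ℤ) - (n₁:ℤ) - 2 by omega) (show (0:ℤ) < (n₁:ℤ) by omega)]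
    · -- odd, even : contradiction
      exfalso
      have hp1 := Nat.odd_iff.mp ho1
      have hp2 := Nat.even_iff.mp he2
      rw [if_pos (by omega), if_neg (by omega)] at key
      zify [show 1 ≤ n₁ by omega, show 2 ≤ n₂ by omega] at key
      have h4 : (4:ℤ) ≤ (n₂:ℤ) := by
        have : 4 ≤ n₂ := by omega
        exact_mod_cast this
      nlinarith [sq_nonneg ((n₁:ℤ)+(n₂:ℤ)), sq_nonneg ((n₁:ℤ)-(n₂:ℤ)), sq_nonneg (n₁:ℤ),
        sq_nonneg (n₂:ℤ),
        mul_pos (show (0:ℤ) < (n₂:ℤ) - (n₁:ℤ) by omega) (show (0:ℤ) < (n₂:ℤ) by omega)]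
    · -- odd, odd : contradiction
      exfalso
      have hp1 := Nat.odd_iff.mp ho1
      have hp2 := Nat.odd_iff.mp ho2
      rw [if_pos (by omega), if_pos (by omega)] at key
      zify [show 1 ≤ n₁ by omega, show 1 ≤ n₂ by omega] at key
      nlinarith [sq_nonneg ((n₁:ℤ)+(n₂:ℤ)), sq_nonneg ((n₁:ℤ)-(n₂:ℤ)), sq_nonneg (n₁:ℤ),
        sq_nonneg (n₂:ℤ)]
  · rintro ⟨rfl, rfl⟩
    norm_num at f1 f2
    omega
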